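/- Let R > 0 and let Ψ : ℂ → ℂ be holomorphic on {z ∈ ℂ : |z| > R} with Ψ(z)/z → 1 as |z| → ∞. Let ρ > R and let w ∈ ℂ be such that Ψ(z) ≠ w for every z with |z| ≥ ρ. Then the circle integral ∮_{|z|=ρ} Ψ′(z)/(Ψ(z) − w) dz equals 2πi. -/

import Mathlib

open Filter

private lemma norm_sub_le_of_tendsto_div {Ψ : ℂ → ℂ}
    (hlim : Tendsto (fun z : ℂ => Ψ z / z) (comap norm atTop) (nhds 1))
    {ε : ℝ} (hε : 0 < ε) :
    ∃ M : ℝ, 1 ≤ M ∧ ∀ z : ℂ, M ≤ ‖z‖ → ‖Ψ z - z‖ ≤ ε * ‖z‖ := by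
  have h := Metric.tendsto_nhds.mp hlim ε hε
  rw [eventually_comap, eventually_atTop] at h
  obtain ⟨M, hM⟩ := h
  refine ⟨max M 1, le_max_right _ _, fun z hz => ?_⟩
  have hz1 : (1 : ℝ) ≤ ‖z‖ := le_trans (le_max_right _ _) hz
  have hz0 : z ≠ 0 := by
    intro h0; rw [h0, norm_zero] at hz1; linarith
  have hd : dist (Ψ z / z) 1 < ε :=
    hM ‖z‖ (le_trans (le_max_left _ _) hz) z rfl
  rw [dist_eq_norm] at hd
  have : ‖Ψ z - z‖ = ‖z‖ * ‖Ψ z / z - 1‖ := by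
    rw [← norm_mul]
    congr 1
    field_simp
  rw [this, mul_comm]
  exact mul_le_mul hd.le le_rfl (norm_nonneg _) hε.le

set_option maxHeartbeats 1000000 in
/-- Winding-number identity: the circle integral of `Ψ'(z)/(Ψ(z) - w)` over `|z| = ρ`
equals `2πi` when `w` is not attained by `Ψ` on `{|z| ≥ ρ}`. -/
theorem circleIntegral_logDeriv_eq_two_pi_I
    (R : ℝ) (hR : 0 < R) (Ψ : ℂ → ℂ)
    (hΨ : DifferentiableOn ℂ Ψ {z : ℂ | R < ‖z‖})
    (hlim : Tendsto (fun z : ℂ => Ψ z / z) (comap norm atTop) (nhds 1))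
    (ρ : ℝ) (hρ : R < ρ) (w : ℂ)
    (hw : ∀ z : ℂ, ρ ≤ ‖z‖ → Ψ z ≠ w) :
    (∮ z in C(0, ρ), deriv Ψ z / (Ψ z - w)) = 2 * Real.pi * Complex.I := by
  have hρ0 : 0 < ρ := hR.trans hρ
  set S : Set ℂ := {z : ℂ | R < ‖z‖} with hSdef
  have hSopen : IsOpen S := isOpen_lt continuous_const continuous_norm
  have hA : AnalyticOnNhd ℂ Ψ S := hΨ.analyticOnNhd hSopen
  have hΨd : ∀ z : ℂ, z ∈ S → DifferentiableAt ℂ Ψ z := fun z hz =>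
    (hA z hz).differentiableAt
  have hderiv : ∀ z : ℂ, z ∈ S → DifferentiableAt ℂ (deriv Ψ) z := fun z hz =>
    (hA.deriv z hz).differentiableAt
  set h : ℂ → ℂ := fun z => deriv Ψ z / (Ψ z - w) with hhdef
  have hmemS : ∀ z : ℂ, ρ ≤ ‖z‖ → z ∈ S := fun z hz => hρ.trans_le hz
  have hdiffh : ∀ z : ℂ, ρ ≤ ‖z‖ → DifferentiableAt ℂ h z := by
    intro z hz
    exact ((hderiv z (hmemS z hz)).div ((hΨd z (hmemS z hz)).sub_const w)
      (sub_ne_zero.mpr (hw z hz)))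
  -- The circle integral of h is the same over every radius r ≥ ρ
  have hinv_eq : ∀ r : ℝ, 0 < r → (∮ z in C(0, r), z⁻¹) = 2 * Real.pi * Complex.I := by
    intro r hr
    have := circleIntegral.integral_sub_inv_of_mem_ball
      (c := (0 : ℂ)) (w := (0 : ℂ)) (R := r) (by simpa using hr)
    simpa using this
  have hhr_eq : ∀ r : ℝ, ρ ≤ r → (∮ z in C(0, r), h z) = ∮ z in C(0, ρ), h z := by
    intro r hr
    refine Complex.circleIntegral_eq_of_differentiable_on_annulus_off_countable hρ0 hr
      Set.countable_empty ?_ ?_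
    · intro z hz
      have hz' : ρ ≤ ‖z‖ := by
        simpa using hz.2
      exact (hdiffh z hz').continuousAt.continuousWithinAt
    · intro z hz
      have hz' : ρ ≤ ‖z‖ := by
        have := hz.1.2
        simp only [Metric.mem_closedBall, not_le, dist_zero_right] at this
        linarith [this]
      exact hdiffh z hz'
  -- It suffices to bound the distance to 2πi by every δ > 0
  set c : ℂ := 2 * Real.pi * Complex.I with hcdef
  have main : ∀ δ : ℝ, 0 < δ → ‖(∮ z in C(0, ρ), h z) - c‖ ≤ δ := by
    intro δ hδ
    set ε : ℝ := min (1/4) (δ / (40 * Real.pi)) with hεdef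
    have hπ : (0 : ℝ) < Real.pi := Real.pi_pos
    have hε : 0 < ε := lt_min (by norm_num) (div_pos hδ (by positivity))
    have hε4 : ε ≤ 1/4 := min_le_left _ _
    obtain ⟨M, hM1, hM⟩ := norm_sub_le_of_tendsto_div hlim hε
    set r : ℝ := max (max (2 * ρ) (2 * M)) (4 * ‖w‖ + ‖w‖ / ε + 1) with hrdef
    have hr2ρ : 2 * ρ ≤ r := le_trans (le_max_left _ _) (le_max_left _ _)
    have hr2M : 2 * M ≤ r := le_trans (le_max_right _ _) (le_max_left _ _)
    have hrw : 4 * ‖w‖ + ‖w‖ / ε + 1 ≤ r := le_max_right _ _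
    have hwε : ‖w‖ / ε ≥ 0 := div_nonneg (norm_nonneg _) hε.le
    have hr4w : 4 * ‖w‖ ≤ r := by nlinarith [norm_nonneg w]
    have hrwε : ‖w‖ ≤ ε * r := by
      rw [← div_le_iff₀' hε]
      nlinarith [norm_nonneg w]
    have hrρ : ρ ≤ r := by linarith
    have hr0 : 0 < r := lt_of_lt_of_le hρ0 hrρ
    have hrM : M ≤ r := by linarith [hM1]
    -- pointwise bound on the sphere of radius r
    have hbound : ∀ z : ℂ, ‖z‖ = r → ‖h z - z⁻¹‖ ≤ 20 * ε / 1 / r := by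
      intro z hz
      have hzρ : ρ ≤ ‖z‖ := by rw [hz]; exact hrρ
      have hz0 : z ≠ 0 := by
        intro h0; rw [h0, norm_zero] at hz; linarith
      have hΨw : Ψ z - w ≠ 0 := sub_ne_zero.mpr (hw z hzρ)
      -- bound on ‖Ψ z - z‖
      have hzM : M ≤ ‖z‖ := by rw [hz]; exact hrM
      have h1 : ‖Ψ z - z‖ ≤ ε * r := by
        have := hM z hzM; rw [hz] at this; exact this
      -- bound on ‖deriv Ψ z - 1‖ via Schwarz
      have hlower : ∀ ζ ∈ Metric.ball z (r/2), r/2 ≤ ‖ζ‖ := by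
        intro ζ hζ
        rw [Metric.mem_ball, dist_eq_norm] at hζ
        have habs := abs_norm_sub_norm_le ζ z
        rw [abs_le] at habs
        rw [hz] at habs
        linarith [habs.1]
      have hball : Metric.ball z (r/2) ⊆ S := by
        intro ζ hζ
        have := hlower ζ hζ
        show R < ‖ζ‖
        linarith
      have hballM : ∀ ζ ∈ Metric.ball z (r/2), M ≤ ‖ζ‖ := by
        intro ζ hζ
        have := hlower ζ hζ
        linarith
      set g : ℂ → ℂ := fun ζ => Ψ ζ - ζ with hgdef
      have hgd : DifferentiableOn ℂ g (Metric.ball z (r/2)) := by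
        intro ζ hζ
        exact ((hΨd ζ (hball hζ)).sub differentiable_id.differentiableAt).differentiableWithinAt
      have hgbound : ∀ ζ ∈ Metric.ball z (r/2), ‖g ζ‖ ≤ ε * (3/2 * r) := by
        intro ζ hζ
        have h3 := hM ζ (hballM ζ hζ)
        have hζle : ‖ζ‖ ≤ 3/2 * r := by
          rw [Metric.mem_ball, dist_eq_norm] at hζ
          calc ‖ζ‖ ≤ ‖ζ - z‖ + ‖z‖ := by
                simpa using norm_add_le (ζ - z) z
            _ ≤ 3/2 * r := by rw [hz]; linarith
        calc ‖g ζ‖ ≤ ε * ‖ζ‖ := h3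
          _ ≤ ε * (3/2 * r) := by nlinarith
      have hmaps : Set.MapsTo g (Metric.ball z (r/2)) (Metric.ball (g z) (4 * ε * r)) := by
        intro ζ hζ
        rw [Metric.mem_ball, dist_eq_norm]
        have h4 := hgbound ζ hζ
        have h5 : ‖g z‖ ≤ ε * r := by rw [hgdef]; exact h1
        calc ‖g ζ - g z‖ ≤ ‖g ζ‖ + ‖g z‖ := norm_sub_le _ _
          _ ≤ ε * (3/2 * r) + ε * r := add_le_add h4 h5
          _ < 4 * ε * r := by nlinarith
      have hgderiv : ‖deriv g z‖ ≤ 8 * ε := by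
        have := Complex.norm_deriv_le_div_of_mapsTo_ball hgd (hmaps.mono_right Metric.ball_subset_closedBall) (by linarith : (0:ℝ) < r/2)
        calc ‖deriv g z‖ ≤ 4 * ε * r / (r/2) := this
          _ = 8 * ε := by field_simp; ring
      have hderiv1 : ‖deriv Ψ z - 1‖ ≤ 8 * ε := by
        have : deriv g z = deriv Ψ z - 1 := by
          rw [hgdef]
          have := deriv_fun_sub (hΨd z (hball (Metric.mem_ball_self (by linarith))))
            differentiable_id.differentiableAt
          simpa using this
        rwa [this] at hgderiv
      -- denominator bound
      have hden : r / 2 ≤ ‖Ψ z - w‖ := by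
        have h6 : ‖z‖ - ‖Ψ z - z‖ - ‖w‖ ≤ ‖Ψ z - w‖ := by
          have h7 : ‖z‖ ≤ ‖Ψ z - w‖ + ‖Ψ z - z‖ + ‖w‖ := by
            calc ‖z‖ = ‖(Ψ z - w) - (Ψ z - z) + w‖ := by ring_nf
              _ ≤ ‖(Ψ z - w) - (Ψ z - z)‖ + ‖w‖ := norm_add_le _ _
              _ ≤ ‖Ψ z - w‖ + ‖Ψ z - z‖ + ‖w‖ := by
                  linarith [norm_sub_le (Ψ z - w) (Ψ z - z)]
          linarith
        rw [hz] at h6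
        nlinarith
      -- numerator
      have hnum : ‖z * deriv Ψ z - (Ψ z - w)‖ ≤ 10 * ε * r := by
        have : z * deriv Ψ z - (Ψ z - w) = z * (deriv Ψ z - 1) - (Ψ z - z) + w := by ring
        rw [this]
        calc ‖z * (deriv Ψ z - 1) - (Ψ z - z) + w‖
            ≤ ‖z * (deriv Ψ z - 1) - (Ψ z - z)‖ + ‖w‖ := norm_add_le _ _
          _ ≤ ‖z * (deriv Ψ z - 1)‖ + ‖Ψ z - z‖ + ‖w‖ := by
              linarith [norm_sub_le (z * (deriv Ψ z - 1)) (Ψ z - z)]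
          _ = ‖z‖ * ‖deriv Ψ z - 1‖ + ‖Ψ z - z‖ + ‖w‖ := by rw [norm_mul]
          _ ≤ r * (8 * ε) + ε * r + ε * r := by
              rw [hz]
              gcongr
          _ = 10 * ε * r := by ring
      have heq : h z - z⁻¹ = (z * deriv Ψ z - (Ψ z - w)) / (z * (Ψ z - w)) := by
        rw [hhdef]
        field_simp
      rw [heq, norm_div, norm_mul, hz]
      have hpos1 : (0:ℝ) < r * ‖Ψ z - w‖ := mul_pos hr0 (lt_of_lt_of_le (by linarith) hden)
      rw [div_le_div_iff₀ hpos1 hr0]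
      calc ‖z * deriv Ψ z - (Ψ z - w)‖ * r ≤ (10 * ε * r) * r :=
            mul_le_mul_of_nonneg_right hnum hr0.le
        _ ≤ 20 * ε / 1 * (r * ‖Ψ z - w‖) := by
            have h9 := mul_le_mul_of_nonneg_left hden
              (mul_nonneg (mul_nonneg (by norm_num : (0:ℝ) ≤ 20) hε.le) hr0.le)
            nlinarith [h9]
    -- assemble
    have hcont : ContinuousOn h (Metric.sphere (0:ℂ) r) := by
      intro z hz
      have hz' : ρ ≤ ‖z‖ := by
        rw [mem_sphere_zero_iff_norm.mp hz]; exact hrρ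
      exact (hdiffh z hz').continuousAt.continuousWithinAt
    have hconti : ContinuousOn (fun z : ℂ => z⁻¹) (Metric.sphere (0:ℂ) r) := by
      intro z hz
      have hz0 : z ≠ 0 := by
        intro h0
        rw [mem_sphere_zero_iff_norm, h0, norm_zero] at hz
        linarith
      exact (continuousAt_inv₀ hz0).continuousWithinAt
    have hint1 : CircleIntegrable h 0 r := hcont.circleIntegrable hr0.le
    have hint2 : CircleIntegrable (fun z : ℂ => z⁻¹) 0 r := hconti.circleIntegrable hr0.le
    have hsplit : (∮ z in C(0, ρ), h z) - c = ∮ z in C(0, r), (h z - z⁻¹) := by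
      rw [circleIntegral.integral_sub hint1 hint2, hhr_eq r hrρ, hinv_eq r hr0]
    rw [hsplit]
    have := circleIntegral.norm_integral_le_of_norm_le_const (c := (0:ℂ)) (R := r)
      (C := 20 * ε / 1 / r) hr0.le (fun z hz => hbound z (mem_sphere_zero_iff_norm.mp hz))
    calc ‖∮ z in C(0, r), (h z - z⁻¹)‖ ≤ 2 * Real.pi * r * (20 * ε / 1 / r) := this
      _ = 40 * Real.pi * ε := by field_simp; ring
      _ ≤ 40 * Real.pi * (δ / (40 * Real.pi)) := by
          gcongr
          exact min_le_right _ _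
      _ = δ := by field_simp
  have : ‖(∮ z in C(0, ρ), h z) - c‖ ≤ 0 :=
    le_of_forall_pos_le_add (by intro ε hε; simpa using main ε hε)
  have := norm_le_zero_iff.mp this
  have := sub_eq_zero.mp this
  simpa [hhdef, hcdef] using this
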